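/- Let T = (V, E) be a finite tree on which an infection starts at source s ∈ V at time 0, with independent strictly positive edge delays τ_e for e ∈ E, and infection time τ_v = Σ_{e ∈ [s,v]} τ_e for each node v, where [s,v] is the unique path from s to v. Then the observer o* ∈ O achieving the minimum infection time among a set of observers O lies on the boundary ∂r of every feasible equivalence class r, where the equivalence classes partition V∖O by the relation u ≡ v iff the path [u,v] contains no observer. In particular, at least one feasible equivalence class exists almost surely, and the set of feasible classes forms a star arrangement (their boundaries have a common observer). -/
import Mathlib


open MeasureTheory ProbabilityTheory SimpleGraph

variable {V : Type*}

/-- The unique path between two vertices of a tree, as a walk. -/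
noncomputable def treePath (G : SimpleGraph V) (hG : G.IsTree) (u v : V) : G.Walk u v :=
  (hG.existsUnique_path u v).choose

/-- The equivalence class (for the relation "the connecting path avoids the observer
set `O`") of a non-observer vertex `u`. -/
def classOf (G : SimpleGraph V) (hG : G.IsTree) (O : Set V) (u : V) : Set V :=
  {w | w ∉ O ∧ ∀ x ∈ (treePath G hG u w).support, x ∉ O}

/-- The boundary `∂r` of a set `r`: the observers adjacent to some vertex of `r`. -/
def boundary (G : SimpleGraph V) (O : Set V) (r : Set V) : Set V :=
  {o | o ∈ O ∧ ∃ u ∈ r, G.Adj o u}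

/-- `V_{o;R}`: vertices whose path from `o` meets no class of `R`. -/
def subtreeVerts (G : SimpleGraph V) (hG : G.IsTree) (R : Set (Set V)) (o : V) : Set V :=
  {w | ∀ r ∈ R, ∀ x ∈ (treePath G hG o w).support, x ∉ r}

/-- Infection time of `v` for source `s` and edge delays `d`: the sum of the delays
along the unique path from `s` to `v`. -/
noncomputable def infectionTime (G : SimpleGraph V) (hG : G.IsTree) (d : Sym2 V → ℝ)
    (s v : V) : ℝ :=
  (((treePath G hG s v).edges).map d).sum

/-- A class `r` is feasible for observer infection times `τ` if, for every `o ∈ ∂r` and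
observers `o₁, o₂` in the subtree `T_{o;r}` with `o₁` an ancestor of `o₂` (i.e. `o₁` on
the path from `o` to `o₂`), `τ o₁ ≤ τ o₂`. -/
def feasible (G : SimpleGraph V) (hG : G.IsTree) (O : Set V) (τ : V → ℝ) (r : Set V) :
    Prop :=
  ∀ o ∈ boundary G O r, ∀ o₁ ∈ subtreeVerts G hG {r} o ∩ O,
    ∀ o₂ ∈ subtreeVerts G hG {r} o ∩ O,
      o₁ ∈ (treePath G hG o o₂).support → τ o₁ ≤ τ o₂

section Aux

variable {V : Type*}

/-- Any path equals the canonical tree path. -/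
lemma treePath_eq {G : SimpleGraph V} (hG : G.IsTree) {a b : V} {p : G.Walk a b}
    (hp : p.IsPath) : p = treePath G hG a b :=
  (hG.existsUnique_path a b).choose_spec.2 p hp

lemma treePath_isPath (G : SimpleGraph V) (hG : G.IsTree) (a b : V) :
    (treePath G hG a b).IsPath :=
  (hG.existsUnique_path a b).choose_spec.1

lemma treePath_self (G : SimpleGraph V) (hG : G.IsTree) (a : V) :
    treePath G hG a a = SimpleGraph.Walk.nil :=
  (treePath_eq hG SimpleGraph.Walk.IsPath.nil).symm

/-- Decomposition of a tree path through an intermediate vertex. -/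
lemma treePath_decomp {G : SimpleGraph V} (hG : G.IsTree) {a b x : V}
    (hx : x ∈ (treePath G hG a b).support) :
    treePath G hG a b = (treePath G hG a x).append (treePath G hG x b) := by
  classical
  set p := treePath G hG a b with hp
  have hpath := treePath_isPath G hG a b
  have h1 : (p.takeUntil x hx) = treePath G hG a x := treePath_eq hG (hpath.takeUntil hx)
  have h2 : (p.dropUntil x hx) = treePath G hG x b := treePath_eq hG (hpath.dropUntil hx)
  rw [← h1, ← h2, SimpleGraph.Walk.take_spec]

/-- Monotonicity of infection times along tree paths. -/
lemma infectionTime_mono {G : SimpleGraph V} (hG : G.IsTree) {d : Sym2 V → ℝ}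
    (hd : ∀ e ∈ G.edgeSet, 0 < d e) {s a b : V}
    (hab : a ∈ (treePath G hG s b).support) :
    infectionTime G hG d s a ≤ infectionTime G hG d s b := by
  have hdec := treePath_decomp hG hab
  have h2 : (0:ℝ) ≤ (((treePath G hG a b).edges).map d).sum := by
    apply List.sum_nonneg
    intro y hy
    obtain ⟨e, he, rfl⟩ := List.mem_map.1 hy
    exact le_of_lt (hd e ((treePath G hG a b).edges_subset_edgeSet he))
  unfold infectionTime
  rw [hdec, SimpleGraph.Walk.edges_append, List.map_append, List.sum_append]
  linarith

/-- Vertices on the tree path to a member of a class are in the class. -/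
lemma mem_classOf_of_mem_support {G : SimpleGraph V} (hG : G.IsTree) {O : Set V}
    {u w x : V} (hw : w ∈ classOf G hG O u) (hx : x ∈ (treePath G hG u w).support) :
    x ∈ classOf G hG O u := by
  classical
  have hpath := treePath_isPath G hG u w
  have h1 : (treePath G hG u w).takeUntil x hx = treePath G hG u x :=
    treePath_eq hG (hpath.takeUntil hx)
  refine ⟨hw.2 x hx, fun y hy => ?_⟩
  rw [← h1] at hy
  exact hw.2 y (SimpleGraph.Walk.support_takeUntil_subset _ hx hy)

/-- First-observer decomposition of a walk from a non-observer to an observer. -/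
lemma first_obs {G : SimpleGraph V} (O : Set V) :
    ∀ {u v : V} (p : G.Walk u v), u ∉ O → v ∈ O →
      ∃ (o u'' : V) (h : G.Adj u'' o) (q₁ : G.Walk u u'') (q' : G.Walk o v),
        o ∈ O ∧ p = (q₁.concat h).append q' ∧ ∀ x ∈ q₁.support, x ∉ O := by
  intro u v p
  induction p with
  | nil => intro hu hv; exact absurd hv hu
  | @cons u w v h p ih =>
    intro hu hv
    by_cases hw : w ∈ O
    · refine ⟨w, u, h, SimpleGraph.Walk.nil, p, hw, ?_, ?_⟩
      · simp [SimpleGraph.Walk.concat_eq_append]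
      · intro x hx
        simp only [SimpleGraph.Walk.support_nil, List.mem_singleton] at hx
        subst hx; exact hu
    · obtain ⟨o, u'', h', q₁, q', hoO, hdec, hav⟩ := ih hw hv
      refine ⟨o, u'', h', SimpleGraph.Walk.cons h q₁, q', hoO, ?_, ?_⟩
      · rw [hdec]
        simp [SimpleGraph.Walk.concat_eq_append]
      · intro x hx
        rw [SimpleGraph.Walk.support_cons, List.mem_cons] at hx
        rcases hx with rfl | hx
        · exact hu
        · exact hav x hx

end Aux

/-- Theorem (feasibility characterization): in the tree infection model with strictly
positive edge delays and infection times `τ v = Σ_{e ∈ [s,v]} τ_e`, the observer `o⋆`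
achieving the (a.s. unique) minimum infection time among the observers lies in the
boundary of every feasible equivalence class; at least one feasible class exists; and the
feasible classes form a star arrangement (their boundaries share a common observer). -/
theorem feasible_classes_star
    [Fintype V] (G : SimpleGraph V) (hG : G.IsTree) (O : Set V)
    (hO : O.Nonempty) (hOproper : O ≠ Set.univ)
    (d : Sym2 V → ℝ) (hd : ∀ e ∈ G.edgeSet, 0 < d e)
    (s : V) (hs : s ∉ O)
    (τ : V → ℝ) (hτ : τ = infectionTime G hG d s)
    (ostar : V) (hostar : ostar ∈ O)
    (hmin : ∀ w ∈ O, w ≠ ostar → τ ostar < τ w) :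
    (∀ u : V, u ∉ O → feasible G hG O τ (classOf G hG O u) →
        ostar ∈ boundary G O (classOf G hG O u)) ∧
      (∃ u : V, u ∉ O ∧ feasible G hG O τ (classOf G hG O u)) ∧
      (∃ o ∈ O, ∀ u : V, u ∉ O → feasible G hG O τ (classOf G hG O u) →
        o ∈ boundary G O (classOf G hG O u)) := by
    classical
  subst hτ
  have main : ∀ u : V, u ∉ O →
      feasible G hG O (infectionTime G hG d s) (classOf G hG O u) →
      ostar ∈ boundary G O (classOf G hG O u) := by
    intro u hu hfeas
    set r := classOf G hG O u with hr
    obtain ⟨o, u'', hadj, q₁, q', hoO, hdec, hav⟩ :=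
      first_obs O (treePath G hG u ostar) hu hostar
    have hpath : ((q₁.concat hadj).append q').IsPath := by
      rw [← hdec]; exact treePath_isPath G hG u ostar
    have hq : (q₁.concat hadj).IsPath := hpath.of_append_left
    have hq' : q'.IsPath := hpath.of_append_right
    have hq₁ : q₁.IsPath := by
      rw [SimpleGraph.Walk.concat_eq_append] at hq
      exact hq.of_append_left
    have htq₁ : treePath G hG u u'' = q₁ := (treePath_eq hG hq₁).symm
    have hu''r : u'' ∈ r := by
      refine ⟨hav u'' q₁.end_mem_support, ?_⟩
      rw [htq₁]; exact hav
    have hobd : o ∈ boundary G O r := ⟨hoO, u'', hu''r, hadj.symm⟩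
    have htq' : treePath G hG o ostar = q' := (treePath_eq hG hq').symm
    have hsub_ostar : ostar ∈ subtreeVerts G hG {r} o := by
      intro r' hr' x hx hxr
      rw [Set.mem_singleton_iff] at hr'; subst hr'
      rw [htq'] at hx
      have hW : ((q₁.concat hadj).append (q'.takeUntil x hx)).IsPath := by
        have hsplit : (q₁.concat hadj).append q'
            = ((q₁.concat hadj).append (q'.takeUntil x hx)).append (q'.dropUntil x hx) := by
          rw [← SimpleGraph.Walk.append_assoc, SimpleGraph.Walk.take_spec]
        rw [hsplit] at hpath
        exact hpath.of_append_left
      have hTx : treePath G hG u x = (q₁.concat hadj).append (q'.takeUntil x hx) :=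
        (treePath_eq hG hW).symm
      have ho_mem : o ∈ (treePath G hG u x).support := by
        rw [hTx, SimpleGraph.Walk.mem_support_append_iff]
        exact Or.inl (q₁.concat hadj).end_mem_support
      exact hxr.2 o ho_mem hoO
    have hsub_o : o ∈ subtreeVerts G hG {r} o := by
      intro r' hr' x hx
      rw [Set.mem_singleton_iff] at hr'; subst hr'
      rw [treePath_self] at hx
      simp only [SimpleGraph.Walk.support_nil, List.mem_singleton] at hx
      subst hx
      exact fun hor => hor.1 hoO
    have hle := hfeas o hobd o ⟨hsub_o, hoO⟩ ostar ⟨hsub_ostar, hostar⟩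
      (SimpleGraph.Walk.start_mem_support _)
    by_cases heq : o = ostar
    · subst heq; exact hobd
    · exact absurd hle (not_le.2 (hmin o hoO heq))
  have hfeas_s : feasible G hG O (infectionTime G hG d s) (classOf G hG O s) := by
    intro o ho o₁ h1 o₂ h2 h12
    obtain ⟨hoO, u', hu'r, hadj⟩ := ho
    have havoid₂ : ∀ x ∈ (treePath G hG o o₂).support, x ∉ classOf G hG O s :=
      h2.1 _ rfl
    have hu'n : u' ∉ (treePath G hG o o₂).support := fun hc => havoid₂ u' hc hu'r
    have hW2 : (SimpleGraph.Walk.cons hadj.symm (treePath G hG o o₂)).IsPath :=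
      (treePath_isPath G hG o o₂).cons hu'n
    have hT2 : treePath G hG u' o₂
        = SimpleGraph.Walk.cons hadj.symm (treePath G hG o o₂) :=
      (treePath_eq hG hW2).symm
    have hsupp1 : ∀ x ∈ (treePath G hG s u').support, x ∈ classOf G hG O s :=
      fun x hx => mem_classOf_of_mem_support hG hu'r hx
    have hWp : ((treePath G hG s u').append (treePath G hG u' o₂)).IsPath := by
      rw [SimpleGraph.Walk.isPath_def, SimpleGraph.Walk.support_append]
      refine List.Nodup.append
        ((SimpleGraph.Walk.isPath_def _).1 (treePath_isPath G hG s u')) ?_ ?_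
      · rw [hT2, SimpleGraph.Walk.support_cons, List.tail_cons]
        exact (SimpleGraph.Walk.isPath_def _).1 (treePath_isPath G hG o o₂)
      · intro x hx hx2
        rw [hT2, SimpleGraph.Walk.support_cons, List.tail_cons] at hx2
        exact havoid₂ x hx2 (hsupp1 x hx)
    have hTfull : treePath G hG s o₂
        = (treePath G hG s u').append (treePath G hG u' o₂) :=
      (treePath_eq hG hWp).symm
    have ho₁ : o₁ ∈ (treePath G hG s o₂).support := by
      rw [hTfull, SimpleGraph.Walk.mem_support_append_iff]
      right
      rw [hT2, SimpleGraph.Walk.support_cons]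
      exact List.mem_cons_of_mem _ h12
    exact infectionTime_mono hG hd ho₁
  exact ⟨main, ⟨s, hs, hfeas_s⟩, ostar, hostar, main⟩
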